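/- Let q be a prime power and p an odd prime not dividing q, let e be the multiplicative order of q modulo p, and let t be the largest integer such that p^t divides q^e − 1. Let b be a positive integer and j the largest integer such that p^j divides b. Let θ(b) denote the proportion of elements of the multiplicative group F_{q^{be}}^* that have exactly be Galois conjugates over F_q and multiplicative order divisible by p. Then 1 − 1/p^{t+j} − 3/q^{be/2} < θ(b) ≤ 1 − 1/p^{t+j}. -/

import Mathlib

open Polynomial

lemma geom_sum_le_two_mul_pow {q : ℕ} (hq : 2 ≤ q) (m : ℕ) :
    ∑ d ∈ Finset.range (m+1), q ^ d ≤ 2 * q ^ m := by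
  induction m with
  | zero => simp
  | succ m ih =>
      rw [Finset.sum_range_succ]
      have h1 : 2 * q ^ m ≤ q ^ (m+1) := by
        rw [pow_succ, mul_comm (q ^ m) q]
        exact Nat.mul_le_mul_right _ hq
      omega

lemma dvd_of_pow_sub_one_dvd {q d : ℕ} (hq : 2 ≤ q) (hd : 0 < d) :
    ∀ m : ℕ, q ^ d - 1 ∣ q ^ m - 1 → d ∣ m := by
  intro m
  induction m using Nat.strong_induction_on with
  | _ m ih =>
    intro h
    rcases Nat.lt_or_ge m d with hmd | hmd
    · rcases Nat.eq_zero_or_pos m with rfl | hm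
      · exact dvd_zero d
      · exfalso
        have h1 : 1 < q ^ m := Nat.one_lt_pow hm.ne' hq
        have h2 := Nat.le_of_dvd (by omega) h
        have h3 : q ^ d ≤ q ^ m := by
          have : 1 ≤ q ^ d := Nat.one_le_pow _ _ (by omega)
          omega
        have := (Nat.pow_le_pow_iff_right hq).mp h3
        omega
    · have h4 : q ^ (m - d) * q ^ d = q ^ m := by rw [← pow_add, Nat.sub_add_cancel hmd]
      have hx1 : 1 ≤ q ^ (m - d) := Nat.one_le_pow _ _ (by omega)
      have hx2 : 1 ≤ q ^ d := Nat.one_le_pow _ _ (by omega)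
      have h5 : q ^ (m - d) * (q ^ d - 1) = q ^ m - q ^ (m - d) := by
        rw [Nat.mul_sub, mul_one, h4]
      have hx3 : q ^ (m - d) ≤ q ^ m := Nat.pow_le_pow_right (by omega) (Nat.sub_le _ _)
      have h6 : q ^ (m - d) - 1 = (q ^ m - 1) - q ^ (m - d) * (q ^ d - 1) := by omega
      have key : q ^ d - 1 ∣ q ^ (m - d) - 1 := by
        rw [h6]; exact Nat.dvd_sub h (Dvd.dvd.mul_left dvd_rfl _)
      obtain ⟨c, hc⟩ := ih (m - d) (by omega) key
      have : m = d * (c + 1) := by rw [Nat.mul_succ, ← hc]; omega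
      exact ⟨c + 1, this⟩

lemma pow_fixed_of_adjoin {F : Type*} [Field F] [Fintype F]
    {K : Type*} [Field K] [Algebra F K] (ζ : K) (m : ℕ)
    (hζ : ζ ^ (Fintype.card F) ^ m = ζ) {x : K} (hx : x ∈ IntermediateField.adjoin F {ζ}) :
    x ^ (Fintype.card F) ^ m = x := by
  obtain ⟨k, hp₀, hqcard⟩ := FiniteField.card F (ringChar F)
  haveI : CharP K (ringChar F) := charP_of_injective_algebraMap (algebraMap F K).injective _
  haveI : ExpChar K (ringChar F) := ExpChar.prime hp₀
  set φ₀ := iterateFrobenius K (ringChar F) (k * m) with hφ₀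
  have hφ : ∀ y : K, φ₀ y = y ^ (Fintype.card F) ^ m := by
    intro y
    rw [hφ₀, iterateFrobenius_def, hqcard, pow_mul]
  let ψ : K →ₐ[F] K :=
    { toRingHom := φ₀
      commutes' := fun c => by
        show φ₀ _ = _
        rw [hφ, ← map_pow, FiniteField.pow_card_pow] }
  have hψ : ∀ y : K, ψ y = y ^ (Fintype.card F) ^ m := hφ
  have hinv : ∀ x ∈ AlgHom.equalizer ψ (AlgHom.id F K), x⁻¹ ∈ AlgHom.equalizer ψ (AlgHom.id F K) := by
    intro y hy
    rw [AlgHom.mem_equalizer] at hy ⊢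
    rw [hψ] at hy ⊢
    simp only [AlgHom.coe_id, id_eq] at hy ⊢
    rw [inv_pow, hy]
  set E : IntermediateField F K := (AlgHom.equalizer ψ (AlgHom.id F K)).toIntermediateField hinv with hE
  have hle : IntermediateField.adjoin F {ζ} ≤ E := by
    rw [IntermediateField.adjoin_le_iff, Set.singleton_subset_iff]
    show ζ ∈ E
    have : ψ ζ = ζ := by rw [hψ]; exact hζ
    exact this
  have hxE : x ∈ E := hle hx
  have : ψ x = x := hxE
  rwa [hψ] at this

lemma minpoly_natDegree_dvd_and_pow {F K : Type*} [Field F] [Fintype F] [Field K] [Algebra F K]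
    [Algebra.IsAlgebraic F K] {ζ : K} {m : ℕ} (hm : 0 < m)
    (hζ : ζ ^ ((Fintype.card F) ^ m - 1) = 1) :
    (minpoly F ζ).natDegree ∣ m ∧
      ζ ^ ((Fintype.card F) ^ (minpoly F ζ).natDegree - 1) = 1 := by
  classical
  set q := Fintype.card F with hqdef
  have hq2 : 1 < q := Fintype.one_lt_card
  have hqm1 : 1 ≤ q ^ m := Nat.one_le_pow _ _ (by omega)
  have hζ0 : ζ ≠ 0 := by
    intro h0
    rw [h0, zero_pow (by have := Nat.one_lt_pow hm.ne' hq2; omega)] at hζ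
    exact zero_ne_one hζ
  have hfix : ζ ^ q ^ m = ζ := by
    conv_lhs => rw [← Nat.sub_add_cancel hqm1]
    rw [pow_succ, hζ, one_mul]
  have hint : IsIntegral F ζ := (Algebra.IsAlgebraic.isAlgebraic (R := F) ζ).isIntegral
  set d := (minpoly F ζ).natDegree with hddef
  have hdpos : 0 < d := minpoly.natDegree_pos hint
  haveI : FiniteDimensional F (IntermediateField.adjoin F {ζ}) :=
    IntermediateField.adjoin.finiteDimensional hint
  haveI : Finite (IntermediateField.adjoin F {ζ}) := Module.finite_of_finite F
  letI : Fintype (IntermediateField.adjoin F {ζ}) := Fintype.ofFinite _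
  set K₀ := IntermediateField.adjoin F {ζ} with hK₀
  have hcard : Fintype.card K₀ = q ^ d := by
    rw [Module.card_eq_pow_finrank (K := F) (V := K₀), hddef]
    congr 1
    exact IntermediateField.adjoin.finrank hint
  -- every element of K₀ is fixed by x ↦ x^(q^m)
  have hfixall : ∀ x : K₀, x ^ q ^ m = x := by
    intro x
    have := pow_fixed_of_adjoin ζ m hfix x.2
    exact Subtype.ext (by push_cast; exact this)
  -- a generator of K₀ˣ
  obtain ⟨g, hg⟩ := IsCyclic.exists_generator (α := K₀ˣ)
  have hog : orderOf g = q ^ d - 1 := by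
    rw [orderOf_eq_card_of_forall_mem_zpowers hg, Nat.card_eq_fintype_card,
      Fintype.card_units, hcard]
  have hgpow : g ^ (q ^ m - 1) = 1 := by
    have h1 : (g : K₀) ^ q ^ m = g := hfixall g
    have h2 : (g : K₀) ^ (q ^ m - 1) = 1 := by
      have hgne : (g : K₀) ≠ 0 := Units.ne_zero g
      apply mul_right_cancel₀ hgne
      rw [one_mul, ← pow_succ, Nat.sub_add_cancel hqm1, h1]
    exact Units.ext (by rw [Units.val_pow_eq_pow_val, Units.val_one]; exact h2)
  have hdvd : q ^ d - 1 ∣ q ^ m - 1 := by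
    rw [← hog]
    exact orderOf_dvd_of_pow_eq_one hgpow
  refine ⟨dvd_of_pow_sub_one_dvd hq2 hdpos m hdvd, ?_⟩
  -- ζ ^ (q^d - 1) = 1
  have hζmem : ζ ∈ K₀ := IntermediateField.mem_adjoin_simple_self F ζ
  have hz : (⟨ζ, hζmem⟩ : K₀) ≠ 0 := by
    intro h
    apply hζ0
    exact congrArg Subtype.val h
  have := FiniteField.pow_card_sub_one_eq_one (⟨ζ, hζmem⟩ : K₀) hz
  rw [hcard] at this
  have := congrArg Subtype.val this
  push_cast at this
  exact this


/-- `θ b` is the proportion of elements of the multiplicative group of the subfield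
`F_{q^{be}}` of the algebraic closure of `F = F_q` (realised as the elements `ζ` with
`ζ^(q^{be}-1) = 1`) that have exactly `be` Galois conjugates over `F` and
multiplicative order divisible by `p`. -/
noncomputable def thetaGL (F : Type*) [Field F] [Fintype F] (q p e b : ℕ) : ℝ :=
  (Nat.card {ζ : AlgebraicClosure F //
      ζ ^ (q ^ (b * e) - 1) = 1 ∧ (minpoly F ζ).natDegree = b * e ∧ p ∣ orderOf ζ} : ℝ)
    / ((q : ℝ) ^ (b * e) - 1)

theorem theta_bounds
    (F : Type) [Field F] [Fintype F] (q p e t b j : ℕ)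
    (hq : q = Fintype.card F)
    (hp : p.Prime) (hodd : Odd p) (hpq : ¬ p ∣ q)
    (he : e = orderOf (q : ZMod p))
    (ht : p ^ t ∣ q ^ e - 1 ∧ ¬ p ^ (t + 1) ∣ q ^ e - 1)
    (hb : 0 < b)
    (hj : p ^ j ∣ b ∧ ¬ p ^ (j + 1) ∣ b) :
    1 - 1 / (p : ℝ) ^ (t + j) - 3 / (q : ℝ) ^ ((b * e : ℝ) / 2) < thetaGL F q p e b
    ∧ thetaGL F q p e b ≤ 1 - 1 / (p : ℝ) ^ (t + j) := by
  classical
  haveI := Fact.mk hp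
  set K := AlgebraicClosure F with hK
  -- basic numerology
  have hq2 : 2 ≤ q := by rw [hq]; exact Fintype.one_lt_card
  have hp3 : 3 ≤ p := by
    obtain ⟨c, hc⟩ := hodd
    have := hp.two_le
    omega
  have hqz : (q : ZMod p) ≠ 0 := by
    rw [Ne, ZMod.natCast_eq_zero_iff]
    exact hpq
  have he1 : 1 ≤ e := by
    rw [he]
    refine orderOf_pos_iff.mpr (isOfFinOrder_iff_pow_eq_one.mpr ⟨p - 1, by omega, ?_⟩)
    exact ZMod.pow_card_sub_one_eq_one hqz
  have hqe1 : 1 ≤ q ^ e := Nat.one_le_pow _ _ (by omega)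
  have hpe : p ∣ q ^ e - 1 := by
    have h1 : ((q : ZMod p)) ^ e = 1 := by rw [he]; exact pow_orderOf_eq_one _
    have h2 : ((q ^ e - 1 : ℕ) : ZMod p) = 0 := by
      push_cast [hqe1]
      rw [h1, sub_self]
    exact (ZMod.natCast_eq_zero_iff _ _).mp h2
  have hqe4 : 4 ≤ q ^ e := by
    have h1 : 1 < q ^ e := Nat.one_lt_pow (by omega) hq2
    have := Nat.le_of_dvd (by omega) hpe
    omega
  have hbe : 1 ≤ b * e := Nat.mul_pos hb (by omega)
  set n := q ^ (b * e) - 1 with hn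
  have hqbe4 : 4 ≤ q ^ (b * e) := by
    refine le_trans hqe4 (Nat.pow_le_pow_right (by omega) ?_)
    exact Nat.le_mul_of_pos_left e hb
  have hnpos : 0 < n := by omega
  -- p-adic valuation of n
  have hvt : padicValNat p (q ^ e - 1) = t := by
    have h0 : q ^ e - 1 ≠ 0 := by omega
    have h1 : t ≤ padicValNat p (q ^ e - 1) := (padicValNat_dvd_iff_le h0).mp ht.1
    have h2 : ¬ (t + 1 ≤ padicValNat p (q ^ e - 1)) :=
      fun h => ht.2 ((padicValNat_dvd_iff_le h0).mpr h)
    omega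
  have hvj : padicValNat p b = j := by
    have h1 : j ≤ padicValNat p b := (padicValNat_dvd_iff_le hb.ne').mp hj.1
    have h2 : ¬ (j + 1 ≤ padicValNat p b) :=
      fun h => hj.2 ((padicValNat_dvd_iff_le hb.ne').mpr h)
    omega
  have hv : padicValNat p n = t + j := by
    have hx : ¬ p ∣ q ^ e := fun h => hpq (hp.dvd_of_dvd_pow h)
    have := padicValNat.pow_sub_pow (x := q ^ e) (y := 1) (p := p) hodd
      (by omega) (by simpa using hpe) hx hb.ne'
    rw [one_pow, ← pow_mul, mul_comm e b] at this
    rw [hn, this, hvt, hvj]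
  set v := t + j with hvdef
  set n' := n / p ^ v with hn'
  have hnn' : p ^ v * n' = n := by
    have h := Nat.ordProj_mul_ordCompl_eq_self n p
    rwa [Nat.factorization_def n hp, hv] at h
  have hpn' : ¬ p ∣ n' := by
    have h := Nat.not_dvd_ordCompl hp hnpos.ne'
    rwa [Nat.factorization_def n hp, hv] at h
  have hn'dvd : n' ∣ n := Dvd.intro_left _ hnn'
  have hn'pos : 0 < n' := by
    rcases Nat.eq_zero_or_pos n' with h | h
    · rw [h, mul_zero] at hnn'; omega
    · exact h
  -- characteristic
  obtain ⟨k, hp₀, hqcard⟩ := FiniteField.card F (ringChar F)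
  haveI : CharP K (ringChar F) := charP_of_injective_algebraMap (algebraMap F K).injective _
  have hp₀q : ringChar F ∣ q := by
    rw [hq, hqcard]
    exact dvd_pow_self _ (by exact_mod_cast k.ne_zero)
  have hcharn : ∀ m : ℕ, m ∣ n → ¬ (ringChar F ∣ m) := by
    intro m hm hdvd
    have h1 : ringChar F ∣ q ^ (b * e) := dvd_pow hp₀q (by omega)
    have h2 : ringChar F ∣ n := hdvd.trans hm
    have h3 : ringChar F ∣ q ^ (b * e) - n := Nat.dvd_sub h1 h2
    have h4 : q ^ (b * e) - n = 1 := by omega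
    rw [h4] at h3
    exact hp₀.one_lt.ne' (Nat.eq_one_of_dvd_one h3)
  haveI hNZ : NeZero ((n : K)) :=
    ⟨by rw [Ne, CharP.cast_eq_zero_iff K (ringChar F) n]; exact hcharn n dvd_rfl⟩
  haveI hNZ' : NeZero ((n' : K)) :=
    ⟨by rw [Ne, CharP.cast_eq_zero_iff K (ringChar F) n']; exact hcharn n' hn'dvd⟩
  -- root counts
  obtain ⟨ζn, hζn⟩ := HasEnoughRootsOfUnity.exists_primitiveRoot K n
  obtain ⟨ζn', hζn'⟩ := HasEnoughRootsOfUnity.exists_primitiveRoot K n'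
  set A := nthRootsFinset n (1 : K) with hA
  have cardA : A.card = n := hζn.card_nthRootsFinset
  have cardA' : (nthRootsFinset n' (1 : K)).card = n' := hζn'.card_nthRootsFinset
  have hmemA : ∀ x : K, x ∈ A ↔ x ^ n = 1 := fun x => mem_nthRootsFinset hnpos (1 : K)
  -- the complement of the p-divisible-order elements
  have hcompl : A.filter (fun ζ => ¬ p ∣ orderOf ζ) = nthRootsFinset n' (1 : K) := by
    ext x
    simp only [Finset.mem_filter, hmemA, mem_nthRootsFinset hn'pos]
    constructor
    · rintro ⟨hx, hpo⟩
      have hdvd : orderOf x ∣ n := orderOf_dvd_of_pow_eq_one hx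
      have hco : Nat.Coprime (orderOf x) (p ^ v) :=
        Nat.Coprime.pow_right _ (Nat.coprime_comm.mp (hp.coprime_iff_not_dvd.mpr hpo))
      rw [← hnn'] at hdvd
      exact orderOf_dvd_iff_pow_eq_one.mp (hco.dvd_of_dvd_mul_left hdvd)
    · intro hx
      have h1 : orderOf x ∣ n' := orderOf_dvd_of_pow_eq_one hx
      refine ⟨?_, fun hpo => hpn' (hpo.trans h1)⟩
      rw [← hnn', mul_comm, pow_mul, hx, one_pow]
  have hPcard : (A.filter (fun ζ => p ∣ orderOf ζ)).card = n - n' := by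
    have hsplit := Finset.card_filter_add_card_filter_not
      (s := A) (p := fun ζ : K => p ∣ orderOf ζ)
    rw [hcompl, cardA, cardA'] at hsplit
    omega
  have hn'len : n' ≤ n := Nat.le_of_dvd hnpos hn'dvd
  -- the bad set: wrong degree
  haveI : Algebra.IsAlgebraic F K := inferInstance
  have hdeg : ∀ ζ : K, ζ ∈ A → (minpoly F ζ).natDegree ≠ b * e →
      (minpoly F ζ).natDegree ∈ (b * e).properDivisors ∧
        ζ ^ (q ^ (minpoly F ζ).natDegree - 1) = 1 := by
    intro ζ hζA hne
    have hζpow : ζ ^ (Fintype.card F ^ (b * e) - 1) = 1 := by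
      rw [← hq]
      exact (hmemA ζ).mp hζA
    obtain ⟨hdvd, hpow⟩ := minpoly_natDegree_dvd_and_pow (F := F) (by omega) hζpow
    rw [← hq] at hpow
    refine ⟨Nat.mem_properDivisors.mpr ⟨hdvd, ?_⟩, hpow⟩
    have : (minpoly F ζ).natDegree ≤ b * e := Nat.le_of_dvd (by omega) hdvd
    omega
  set Bad := A.filter (fun ζ => (minpoly F ζ).natDegree ≠ b * e) with hBad
  have hbadcard : Bad.card ≤ 2 * q ^ (b * e / 2) := by
    have hsub : Bad ⊆ (b * e).properDivisors.biUnion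
        (fun d => nthRootsFinset (q ^ d - 1) (1 : K)) := by
      intro ζ hζ
      rw [hBad, Finset.mem_filter] at hζ
      obtain ⟨hmem, hpow⟩ := hdeg ζ hζ.1 hζ.2
      refine Finset.mem_biUnion.mpr ⟨_, hmem, ?_⟩
      have hd1 : 0 < (minpoly F ζ).natDegree := Nat.pos_of_mem_properDivisors hmem
      rw [mem_nthRootsFinset]
      · exact hpow
      · have : 2 ≤ q ^ (minpoly F ζ).natDegree :=
          le_trans hq2 (Nat.le_self_pow (by omega) q)
        omega
    calc Bad.card ≤ ((b * e).properDivisors.biUnion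
          (fun d => nthRootsFinset (q ^ d - 1) (1 : K))).card := Finset.card_le_card hsub
      _ ≤ ∑ d ∈ (b * e).properDivisors, (nthRootsFinset (q ^ d - 1) (1 : K)).card :=
          Finset.card_biUnion_le
      _ ≤ ∑ d ∈ (b * e).properDivisors, q ^ d := by
          refine Finset.sum_le_sum fun d hd => ?_
          have h1 : (nthRootsFinset (q ^ d - 1) (1 : K)).card ≤ q ^ d - 1 := by
            rw [nthRootsFinset_def]
            exact le_trans (Multiset.toFinset_card_le _) (card_nthRoots _ 1)
          omega
      _ ≤ ∑ d ∈ Finset.range (b * e / 2 + 1), q ^ d := by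
          refine Finset.sum_le_sum_of_subset ?_
          intro d hd
          rw [Nat.mem_properDivisors] at hd
          rw [Finset.mem_range]
          obtain ⟨⟨c, hc⟩, hlt⟩ := hd
          have hc2 : 2 ≤ c := by
            rcases Nat.lt_or_ge c 2 with h | h
            · interval_cases c <;> omega
            · exact h
          have : d * 2 ≤ b * e := by
            calc d * 2 ≤ d * c := Nat.mul_le_mul_left _ hc2
            _ = b * e := hc.symm
          omega
      _ ≤ 2 * q ^ (b * e / 2) := geom_sum_le_two_mul_pow hq2 _

  -- the good set
  set Good := A.filter (fun ζ => (minpoly F ζ).natDegree = b * e ∧ p ∣ orderOf ζ) with hGood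
  have hNatCard : Nat.card {ζ : K //
      ζ ^ (q ^ (b * e) - 1) = 1 ∧ (minpoly F ζ).natDegree = b * e ∧ p ∣ orderOf ζ}
      = Good.card := by
    rw [← Nat.card_eq_finsetCard]
    exact Nat.card_congr (Equiv.subtypeEquivRight fun ζ => by
      rw [hGood, Finset.mem_filter, hmemA])
  have hsplit2 : Good.card + ((A.filter (fun ζ => p ∣ orderOf ζ)).filter
      (fun ζ => ¬ (minpoly F ζ).natDegree = b * e)).card = n - n' := by
    have h1 := Finset.card_filter_add_card_filter_not
      (s := A.filter (fun ζ => p ∣ orderOf ζ))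
      (p := fun ζ : K => (minpoly F ζ).natDegree = b * e)
    rw [hPcard] at h1
    have h2 : (A.filter (fun ζ => p ∣ orderOf ζ)).filter
        (fun ζ => (minpoly F ζ).natDegree = b * e) = Good := by
      rw [Finset.filter_filter, hGood]
      apply Finset.filter_congr
      intro x _
      tauto
    rw [h2] at h1
    exact h1
  set bad := ((A.filter (fun ζ => p ∣ orderOf ζ)).filter
      (fun ζ => ¬ (minpoly F ζ).natDegree = b * e)).card with hbaddef
  have hbadle : bad ≤ 2 * q ^ (b * e / 2) := by
    refine le_trans (Finset.card_le_card ?_) hbadcard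
    intro x hx
    rw [Finset.mem_filter, Finset.mem_filter] at hx
    rw [hBad, Finset.mem_filter]
    exact ⟨hx.1.1, hx.2⟩
  -- real arithmetic
  have hqbe1 : 1 ≤ q ^ (b * e) := by omega
  have hdenom : ((q : ℝ)) ^ (b * e) - 1 = (n : ℝ) := by
    rw [hn]
    push_cast [hqbe1]
    ring
  have hNpos : (0 : ℝ) < (n : ℝ) := by positivity
  have htheta : thetaGL F q p e b = (Good.card : ℝ) / (n : ℝ) := by
    rw [thetaGL, hNatCard, hdenom]
  have hpvne : ((p : ℝ)) ^ v ≠ 0 := by positivity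
  have hn'ne : ((n' : ℝ)) ≠ 0 := by positivity
  have hcastnn' : (n : ℝ) = (p : ℝ) ^ v * (n' : ℝ) := by exact_mod_cast hnn'.symm
  have hfrac : ((n : ℝ) - (n' : ℝ)) / (n : ℝ) = 1 - 1 / (p : ℝ) ^ v := by
    rw [hcastnn']
    field_simp
  have hGoodR : (Good.card : ℝ) = (n : ℝ) - (n' : ℝ) - (bad : ℝ) := by
    have h1 : Good.card + bad = n - n' := hsplit2
    have h2 : (Good.card : ℝ) + (bad : ℝ) = ((n - n' : ℕ) : ℝ) := by exact_mod_cast h1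
    rw [Nat.cast_sub hn'len] at h2
    linarith
  have hupper : thetaGL F q p e b ≤ 1 - 1 / (p : ℝ) ^ v := by
    rw [htheta, ← hfrac]
    have hbad0 : (0:ℝ) ≤ (bad : ℝ) := Nat.cast_nonneg _
    gcongr
    linarith [hGoodR]
  set Qh := (q : ℝ) ^ ((b * e : ℝ) / 2) with hQhdef
  have hq1R : (1:ℝ) ≤ (q:ℝ) := by exact_mod_cast (by omega : 1 ≤ q)
  have hq0R : (0:ℝ) < (q:ℝ) := by positivity
  have hQhpos : 0 < Qh := Real.rpow_pos_of_pos hq0R _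
  have hQle : ((q ^ (b * e / 2) : ℕ) : ℝ) ≤ Qh := by
    push_cast
    rw [← Real.rpow_natCast (q:ℝ) (b * e / 2)]
    apply Real.rpow_le_rpow_of_exponent_le hq1R
    have h : ((b * e / 2 : ℕ) : ℝ) ≤ ((b * e : ℕ) : ℝ) / ((2:ℕ) : ℝ) := Nat.cast_div_le
    push_cast at h
    linarith
  have hQQ : Qh * Qh = (q:ℝ) ^ (b * e) := by
    rw [hQhdef, ← Real.rpow_add hq0R, ← Real.rpow_natCast (q:ℝ) (b * e)]
    congr 1
    push_cast
    ring
  have hc4 : (4:ℝ) ≤ (q:ℝ) ^ (b * e) := by exact_mod_cast hqbe4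
  have hbadR : (bad : ℝ) ≤ 2 * Qh := by
    calc (bad:ℝ) ≤ ((2 * q ^ (b * e / 2) : ℕ) : ℝ) := by exact_mod_cast hbadle
    _ ≤ 2 * Qh := by push_cast at hQle ⊢; linarith
  have hkey : 2 * Qh / (n:ℝ) < 3 / Qh := by
    rw [div_lt_div_iff₀ hNpos hQhpos]
    nlinarith [hQQ, hc4, hdenom]
  have hlower : 1 - 1/(p:ℝ)^v - 3/Qh < thetaGL F q p e b := by
    rw [htheta, hGoodR]
    have h1 : ((n:ℝ) - n' - bad)/n = ((n:ℝ) - n')/n - bad/n := by ring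
    rw [h1, hfrac]
    have h2 : (bad:ℝ)/n ≤ 2*Qh/n := by gcongr
    have h3 := lt_of_le_of_lt h2 hkey
    linarith
  exact ⟨hlower, hupper⟩
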